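/- For every integer n ≥ 1, the function t ↦ K(t,n) is differentiable on [0,∞) and satisfies (1/λ) ∂K(t,n)/∂t = −(∑_{j=1}^{n} F(j)) K(t,n) + 2 ∑_{i=1}^{n−1} F(n−i) K(t,i) + ∑_{i=1}^{n} f(i) · i · (n+1−i), with boundary condition K(0,n) = 0. -/

import Mathlib

open Finset MeasureTheory intervalIntegral Real Filter

noncomputable section

/-- The CDF `F(k) = ∑_{j=1}^k f(j)` of the bundle-size pmf `f`. -/
def cdfF (f : ℕ → ℝ) (k : ℕ) : ℝ := ∑ j ∈ Finset.Icc 1 k, f j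

/-- `R(t,n)`: the expected number of remaining packages at time `t` starting from `n`
packages on a line, given via its closed-form solution in terms of the constants `γ`. -/
def Rfun (f : ℕ → ℝ) (γ : ℕ → ℕ → ℝ) (lam t : ℝ) (n : ℕ) : ℝ :=
  if 0 < cdfF f n then
    ∑ i ∈ Finset.Icc 1 n, γ n i * Real.exp (-(lam * ∑ j ∈ Finset.Icc 1 i, cdfF f j) * t)
  else (n : ℝ)

/-- `K(t,n) = n - R(t,n)`. -/
def Kfun (f : ℕ → ℝ) (γ : ℕ → ℕ → ℝ) (lam t : ℝ) (n : ℕ) : ℝ :=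
  (n : ℝ) - Rfun f γ lam t n

section Helpers

variable {f : ℕ → ℝ}

lemma cdfF_nonneg (hf : ∀ k, 0 ≤ f k) (k : ℕ) : 0 ≤ cdfF f k :=
  Finset.sum_nonneg fun j _ => hf j

lemma cdfF_mono (hf : ∀ k, 0 ≤ f k) {k l : ℕ} (h : k ≤ l) : cdfF f k ≤ cdfF f l :=
  Finset.sum_le_sum_of_subset_of_nonneg (Finset.Icc_subset_Icc_right h)
    (fun j _ _ => hf j)

lemma cdfF_zero_of_le (hf : ∀ k, 0 ≤ f k) {n k : ℕ} (h0 : cdfF f n = 0) (hk : k ≤ n) :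
    cdfF f k = 0 :=
  le_antisymm (h0 ▸ cdfF_mono hf hk) (cdfF_nonneg hf k)

lemma f_zero_of_cdfF_zero (hf : ∀ k, 0 ≤ f k) {n k : ℕ} (h0 : cdfF f n = 0)
    (hk : k ∈ Finset.Icc 1 n) : f k = 0 :=
  (Finset.sum_eq_zero_iff_of_nonneg (fun j _ => hf j)).1 h0 k hk

lemma sum_Icc_reflect (h : ℕ → ℝ) (n : ℕ) :
    ∑ i ∈ Finset.Icc 1 (n - 1), h i = ∑ i ∈ Finset.Icc 1 (n - 1), h (n - i) := by
  refine Finset.sum_nbij' (fun i => n - i) (fun i => n - i) ?_ ?_ ?_ ?_ ?_ <;>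
    simp only [Finset.mem_Icc] <;> intro a ha
  · omega
  · omega
  · omega
  · omega
  · have : n - (n - a) = a := by omega
    rw [this]

lemma sum_Icc_triangle (a : ℕ → ℕ → ℝ) (N : ℕ) :
    ∑ i ∈ Finset.Icc 1 N, ∑ k ∈ Finset.Icc 1 i, a i k
      = ∑ k ∈ Finset.Icc 1 N, ∑ i ∈ Finset.Icc k N, a i k := by
  refine Finset.sum_comm' ?_
  intro i k
  simp only [Finset.mem_Icc]
  omega

lemma sum_Icc_split (g : ℕ → ℝ) {k n : ℕ} (hk : k ≤ n) :
    ∑ j ∈ Finset.Icc (k + 1) n, g j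
      = (∑ j ∈ Finset.Icc 1 n, g j) - ∑ j ∈ Finset.Icc 1 k, g j := by
  have h := Finset.sum_Ioc_consecutive g (Nat.zero_le k) hk
  rw [Finset.Icc_add_one_left_eq_Ioc]
  have e1 : Finset.Icc 1 n = Finset.Ioc 0 n := by rw [← Finset.Icc_add_one_left_eq_Ioc]; rfl
  have e2 : Finset.Icc 1 k = Finset.Ioc 0 k := by rw [← Finset.Icc_add_one_left_eq_Ioc]; rfl
  rw [e1, e2]
  linarith [h]

lemma S_formula (f : ℕ → ℝ) (n : ℕ) :
    ∑ j ∈ Finset.Icc 1 n, cdfF f j = ∑ k ∈ Finset.Icc 1 n, ((n : ℝ) + 1 - k) * f k := by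
  induction n with
  | zero => simp
  | succ n ih =>
    rw [Finset.sum_Icc_succ_top (by omega), Finset.sum_Icc_succ_top (by omega), ih]
    unfold cdfF
    rw [Finset.sum_Icc_succ_top (by omega)]
    have hc : ∀ k ∈ Finset.Icc 1 n, ((n:ℝ) + 1 - k) * f k + f k = ((n:ℝ) + 1 + 1 - k) * f k := by
      intro k _; ring
    rw [← add_assoc, ← Finset.sum_add_distrib, Finset.sum_congr rfl hc]
    push_cast
    ring

lemma key_const (f : ℕ → ℝ) (n : ℕ) :
    (n : ℝ) * (∑ j ∈ Finset.Icc 1 n, cdfF f j)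
      = 2 * (∑ i ∈ Finset.Icc 1 (n - 1), ((n : ℝ) - i) * cdfF f i)
        + ∑ i ∈ Finset.Icc 1 n, f i * i * ((n : ℝ) + 1 - i) := by
  induction n with
  | zero => simp
  | succ n ih =>
    rcases Nat.eq_zero_or_pos n with rfl | hn
    · simp [cdfF]
    obtain ⟨p, rfl⟩ : ∃ p, n = p + 1 := ⟨n - 1, by omega⟩
    have hs : p + 1 + 1 - 1 = p + 1 := by omega
    have hs' : p + 1 - 1 = p := by omega
    rw [hs]
    rw [hs'] at ih
    set a1 := ∑ i ∈ Finset.Icc 1 p, ((p:ℝ) + 1 - i) * cdfF f i with ha1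
    set a2 := ∑ i ∈ Finset.Icc 1 p, cdfF f i with ha2
    set b1 := ∑ i ∈ Finset.Icc 1 (p+1), f i * i * ((p:ℝ) + 1 + 1 - i) with hb1
    set b2 := ∑ i ∈ Finset.Icc 1 (p+1), (i:ℝ) * f i with hb2
    set Ff := ∑ i ∈ Finset.Icc 1 (p+1), f i with hFf
    have hF1 : cdfF f (p+1) = Ff := rfl
    have hF2 : cdfF f (p+1+1) = Ff + f (p+1+1) := by
      rw [hFf]; unfold cdfF
      rw [Finset.sum_Icc_succ_top (by omega)]
    have hSsum : ∑ j ∈ Finset.Icc 1 (p+1), cdfF f j = a2 + Ff := by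
      rw [Finset.sum_Icc_succ_top (by omega), ha2, hF1]
    have hSform : ∑ j ∈ Finset.Icc 1 (p+1), cdfF f j = ((p:ℝ) + 2) * Ff - b2 := by
      rw [S_formula]
      have hc : ∀ k ∈ Finset.Icc 1 (p+1), (((p+1:ℕ) : ℝ) + 1 - k) * f k
          = ((p:ℝ) + 2) * f k - (k:ℝ) * f k := by intro k _; push_cast; ring
      rw [Finset.sum_congr rfl hc, Finset.sum_sub_distrib, ← Finset.mul_sum, hb2, hFf]
    have hS2 : a2 + Ff = ((p:ℝ) + 2) * Ff - b2 := by rw [← hSsum, hSform]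
    have ihm : ∑ i ∈ Finset.Icc 1 p, (((p+1:ℕ):ℝ) - i) * cdfF f i = a1 := by
      rw [ha1]; exact Finset.sum_congr rfl fun i _ => by push_cast; ring
    have ihr : ∑ i ∈ Finset.Icc 1 (p+1), f i * i * (((p+1:ℕ):ℝ) + 1 - i) = b1 := by
      rw [hb1]; exact Finset.sum_congr rfl fun i _ => by push_cast; ring
    rw [hSsum, ihm, ihr] at ih
    have G1 : ∑ j ∈ Finset.Icc 1 (p+1+1), cdfF f j = a2 + 2*Ff + f (p+1+1) := by
      rw [Finset.sum_Icc_succ_top (by omega), hSsum, hF2]; ring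
    have G2 : ∑ i ∈ Finset.Icc 1 (p+1), (((p+1+1:ℕ):ℝ) - i) * cdfF f i
        = a1 + a2 + Ff := by
      rw [Finset.sum_Icc_succ_top (by omega)]
      have hc : ∀ i ∈ Finset.Icc 1 p, (((p+1+1:ℕ):ℝ) - i) * cdfF f i
          = ((p:ℝ) + 1 - i) * cdfF f i + cdfF f i := by intro i _; push_cast; ring
      rw [Finset.sum_congr rfl hc, Finset.sum_add_distrib, ← ha1, ← ha2, hF1]
      push_cast; ring
    have G3 : ∑ i ∈ Finset.Icc 1 (p+1+1), f i * i * (((p+1+1:ℕ):ℝ) + 1 - i)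
        = b1 + b2 + ((p:ℝ) + 2) * f (p+1+1) := by
      rw [Finset.sum_Icc_succ_top (by omega)]
      have hc : ∀ i ∈ Finset.Icc 1 (p+1), f i * i * (((p+1+1:ℕ):ℝ) + 1 - i)
          = f i * i * ((p:ℝ) + 1 + 1 - i) + (i:ℝ) * f i := by
        intro i _; push_cast; ring
      rw [Finset.sum_congr rfl hc, Finset.sum_add_distrib, ← hb1, ← hb2]
      push_cast; ring
    rw [G1, G2, G3]
    push_cast at ih ⊢
    linear_combination ih - hS2

end Helpers

section Main

variable {f : ℕ → ℝ} {γ : ℕ → ℕ → ℝ} {lam : ℝ}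

/-- A uniform representation of `Kfun`, valid whether or not `cdfF f i > 0`. -/
lemma K_repr (hf_nonneg : ∀ k, 0 ≤ f k)
    (hγ_zero : ∀ n j : ℕ, cdfF f n = 0 → 1 ≤ j → j ≤ n → γ n j = 1)
    (t : ℝ) (i : ℕ) :
    Kfun f γ lam t i = (i : ℝ) - ∑ k ∈ Finset.Icc 1 i,
      γ i k * Real.exp (-(lam * ∑ j ∈ Finset.Icc 1 k, cdfF f j) * t) := by
  unfold Kfun Rfun
  by_cases hFi : 0 < cdfF f i
  · rw [if_pos hFi]
  · rw [if_neg hFi]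
    have h0 : cdfF f i = 0 := le_antisymm (not_lt.1 hFi) (cdfF_nonneg hf_nonneg i)
    have hterm : ∀ k ∈ Finset.Icc 1 i,
        γ i k * Real.exp (-(lam * ∑ j ∈ Finset.Icc 1 k, cdfF f j) * t) = 1 := by
      intro k hk
      simp only [Finset.mem_Icc] at hk
      have hγ1 := hγ_zero i k h0 hk.1 hk.2
      have hS0 : ∑ j ∈ Finset.Icc 1 k, cdfF f j = 0 :=
        Finset.sum_eq_zero fun j hj => by
          simp only [Finset.mem_Icc] at hj
          exact cdfF_zero_of_le hf_nonneg h0 (le_trans hj.2 hk.2)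
      rw [hγ1, hS0]
      simp
    rw [Finset.sum_congr rfl hterm, Finset.sum_const, Nat.card_Icc]
    simp

lemma gamma_id (hf_nonneg : ∀ k, 0 ≤ f k)
    (hγ_rec : ∀ n i : ℕ, 0 < cdfF f n → 1 ≤ i → i < n →
      γ n i = 2 * (∑ j ∈ Finset.Icc 1 (n - i), cdfF f j * γ (n - j) i) /
        (∑ k ∈ Finset.Icc (i + 1) n, cdfF f k))
    {n k : ℕ} (hF : 0 < cdfF f n) (hk1 : 1 ≤ k) (hkn : k < n) :
    γ n k * ((∑ j ∈ Finset.Icc 1 n, cdfF f j) - ∑ j ∈ Finset.Icc 1 k, cdfF f j)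
      = 2 * ∑ j ∈ Finset.Icc 1 (n - k), cdfF f j * γ (n - j) k := by
  have hden : ∑ j ∈ Finset.Icc (k+1) n, cdfF f j
      = (∑ j ∈ Finset.Icc 1 n, cdfF f j) - ∑ j ∈ Finset.Icc 1 k, cdfF f j :=
    sum_Icc_split _ (le_of_lt hkn)
  have hmem : n ∈ Finset.Icc (k+1) n := by simp only [Finset.mem_Icc]; omega
  have hpos : 0 < ∑ j ∈ Finset.Icc (k+1) n, cdfF f j :=
    lt_of_lt_of_le hF (Finset.single_le_sum (fun j _ => cdfF_nonneg hf_nonneg j) hmem)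
  rw [← hden, hγ_rec n k hF hk1 hkn, div_mul_cancel₀ _ (ne_of_gt hpos)]

lemma main_algebra (hf_nonneg : ∀ k, 0 ≤ f k)
    (hγ_zero : ∀ n j : ℕ, cdfF f n = 0 → 1 ≤ j → j ≤ n → γ n j = 1)
    (hγ_rec : ∀ n i : ℕ, 0 < cdfF f n → 1 ≤ i → i < n →
      γ n i = 2 * (∑ j ∈ Finset.Icc 1 (n - i), cdfF f j * γ (n - j) i) /
        (∑ k ∈ Finset.Icc (i + 1) n, cdfF f k))
    {n : ℕ} (hn : 1 ≤ n) (hF : 0 < cdfF f n) (t : ℝ) :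
    ∑ i ∈ Finset.Icc 1 n, γ n i * ((lam * ∑ j ∈ Finset.Icc 1 i, cdfF f j)
        * Real.exp (-(lam * ∑ j ∈ Finset.Icc 1 i, cdfF f j) * t))
      = lam * (-(∑ j ∈ Finset.Icc 1 n, cdfF f j) * Kfun f γ lam t n
          + 2 * ∑ i ∈ Finset.Icc 1 (n - 1), cdfF f (n - i) * Kfun f γ lam t i
          + ∑ i ∈ Finset.Icc 1 n, f i * (i : ℝ) * ((n : ℝ) + 1 - (i : ℝ))) := by
  -- notation
  set E : ℕ → ℝ := fun k =>
    Real.exp (-(lam * ∑ j ∈ Finset.Icc 1 k, cdfF f j) * t) with hE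
  set Sn : ℝ := ∑ j ∈ Finset.Icc 1 n, cdfF f j with hSn
  -- uniform representation of K
  have hKn : Kfun f γ lam t n = (n:ℝ) - ∑ k ∈ Finset.Icc 1 n, γ n k * E k :=
    K_repr hf_nonneg hγ_zero t n
  have hreprs : ∑ i ∈ Finset.Icc 1 (n-1), cdfF f (n-i) * Kfun f γ lam t i
      = ∑ i ∈ Finset.Icc 1 (n-1), cdfF f (n-i)
          * ((i:ℝ) - ∑ k ∈ Finset.Icc 1 i, γ i k * E k) :=
    Finset.sum_congr rfl fun i _ => by rw [K_repr hf_nonneg hγ_zero t i]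
  -- split the middle sum
  have hsplit : ∑ i ∈ Finset.Icc 1 (n-1), cdfF f (n-i)
        * ((i:ℝ) - ∑ k ∈ Finset.Icc 1 i, γ i k * E k)
      = (∑ i ∈ Finset.Icc 1 (n-1), cdfF f (n-i) * (i:ℝ))
        - ∑ i ∈ Finset.Icc 1 (n-1), cdfF f (n-i) * ∑ k ∈ Finset.Icc 1 i, γ i k * E k := by
    rw [← Finset.sum_sub_distrib]
    exact Finset.sum_congr rfl fun i _ => by ring
  -- constant part: reflection
  have hconst : ∑ i ∈ Finset.Icc 1 (n-1), cdfF f (n-i) * (i:ℝ)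
      = ∑ i ∈ Finset.Icc 1 (n-1), ((n:ℝ) - i) * cdfF f i := by
    rw [sum_Icc_reflect (fun i => cdfF f (n - i) * (i:ℝ)) n]
    refine Finset.sum_congr rfl fun i hi => ?_
    simp only [Finset.mem_Icc] at hi
    have h1 : n - (n - i) = i := by omega
    have h2 : ((n - i : ℕ):ℝ) = (n:ℝ) - i := Nat.cast_sub (by omega)
    rw [h1, h2]
    ring
  -- the exponential double sum
  have hX : 2 * (∑ i ∈ Finset.Icc 1 (n-1), cdfF f (n-i)
        * ∑ k ∈ Finset.Icc 1 i, γ i k * E k)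
      = ∑ k ∈ Finset.Icc 1 (n-1), γ n k
          * ((Sn - ∑ j ∈ Finset.Icc 1 k, cdfF f j) * E k) := by
    have h1 : ∑ i ∈ Finset.Icc 1 (n-1), cdfF f (n-i) * ∑ k ∈ Finset.Icc 1 i, γ i k * E k
        = ∑ i ∈ Finset.Icc 1 (n-1), ∑ k ∈ Finset.Icc 1 i, cdfF f (n-i) * (γ i k * E k) :=
      Finset.sum_congr rfl fun i _ => Finset.mul_sum _ _ _
    rw [h1, sum_Icc_triangle (fun i k => cdfF f (n-i) * (γ i k * E k)) (n-1),
      Finset.mul_sum]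
    refine Finset.sum_congr rfl fun k hk => ?_
    simp only [Finset.mem_Icc] at hk
    have hkn : k < n := by omega
    -- reindex the inner sum
    have hre : ∑ i ∈ Finset.Icc k (n-1), cdfF f (n-i) * (γ i k * E k)
        = ∑ j ∈ Finset.Icc 1 (n-k), cdfF f j * γ (n-j) k * E k := by
      refine Finset.sum_nbij' (fun i => n - i) (fun j => n - j) ?_ ?_ ?_ ?_ ?_ <;>
        simp only [Finset.mem_Icc] <;> intro a ha
      · omega
      · omega
      · omega
      · omega
      · have h1 : n - (n - a) = a := by omega
        rw [h1]; ring
    rw [hre, ← Finset.sum_mul]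
    have hg := gamma_id hf_nonneg hγ_rec hF hk.1 hkn
    rw [← hSn] at hg
    linear_combination (-(E k)) * hg
  -- extend the sum to Icc 1 n (the top term vanishes)
  have hext : ∑ k ∈ Finset.Icc 1 (n-1), γ n k
        * ((Sn - ∑ j ∈ Finset.Icc 1 k, cdfF f j) * E k)
      = ∑ k ∈ Finset.Icc 1 n, γ n k
        * ((Sn - ∑ j ∈ Finset.Icc 1 k, cdfF f j) * E k) := by
    obtain ⟨p, rfl⟩ : ∃ p, n = p + 1 := ⟨n - 1, by omega⟩
    rw [Finset.sum_Icc_succ_top (by omega)]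
    have : Sn - ∑ j ∈ Finset.Icc 1 (p+1), cdfF f j = 0 := by rw [hSn]; ring
    rw [show p + 1 - 1 = p by omega, this]
    ring
  have hkc := key_const f n
  -- assemble
  calc ∑ i ∈ Finset.Icc 1 n, γ n i * ((lam * ∑ j ∈ Finset.Icc 1 i, cdfF f j) * E i)
      = lam * (∑ k ∈ Finset.Icc 1 n, Sn * (γ n k * E k)
          - ∑ k ∈ Finset.Icc 1 n, γ n k * ((Sn - ∑ j ∈ Finset.Icc 1 k, cdfF f j) * E k)) := by
        rw [← Finset.sum_sub_distrib, Finset.mul_sum]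
        exact Finset.sum_congr rfl fun k _ => by ring
    _ = lam * (Sn * (∑ k ∈ Finset.Icc 1 n, γ n k * E k)
          - 2 * (∑ i ∈ Finset.Icc 1 (n-1), cdfF f (n-i)
              * ∑ k ∈ Finset.Icc 1 i, γ i k * E k)) := by
        rw [← hext, hX, Finset.mul_sum]
    _ = lam * (-Sn * Kfun f γ lam t n
          + 2 * ∑ i ∈ Finset.Icc 1 (n - 1), cdfF f (n - i) * Kfun f γ lam t i
          + ∑ i ∈ Finset.Icc 1 n, f i * (i : ℝ) * ((n : ℝ) + 1 - (i : ℝ))) := by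
        rw [hKn, hreprs, hsplit, hconst]
        rw [← hSn] at hkc
        have hkc' : ∀ i ∈ Finset.Icc 1 n, f i * (i:ℝ) * ((n:ℝ) + 1 - i)
            = f i * (i:ℝ) * ((n:ℝ) + 1 - i) := fun _ _ => rfl
        linear_combination lam * hkc

/-- For every `n ≥ 1`, `t ↦ K(t,n)` is differentiable on `[0,∞)` and satisfies
`(1/λ) ∂K(t,n)/∂t = -(∑_{j=1}^n F(j)) K(t,n) + 2 ∑_{i=1}^{n-1} F(n-i) K(t,i)
+ ∑_{i=1}^n f(i)·i·(n+1-i)` with `K(0,n) = 0`. -/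
theorem stmt_1
    (m : ℕ) (hm : 1 ≤ m) (f : ℕ → ℝ)
    (hf_nonneg : ∀ k, 0 ≤ f k)
    (hf_sum : ∑ k ∈ Finset.Icc 1 m, f k = 1)
    (hf_supp : ∀ k : ℕ, k = 0 ∨ m < k → f k = 0)
    (lam : ℝ) (hlam : 0 < lam)
    (γ : ℕ → ℕ → ℝ)
    (hγ_zero : ∀ n j : ℕ, cdfF f n = 0 → 1 ≤ j → j ≤ n → γ n j = 1)
    (hγ_rec : ∀ n i : ℕ, 0 < cdfF f n → 1 ≤ i → i < n →
      γ n i = 2 * (∑ j ∈ Finset.Icc 1 (n - i), cdfF f j * γ (n - j) i) /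
        (∑ k ∈ Finset.Icc (i + 1) n, cdfF f k))
    (hγ_diag : ∀ n : ℕ, 0 < cdfF f n →
      γ n n = (n : ℝ) - ∑ i ∈ Finset.Icc 1 (n - 1), γ n i)
    (n : ℕ) (hn : 1 ≤ n) :
    (∀ t : ℝ, 0 ≤ t →
      HasDerivAt (fun s => Kfun f γ lam s n)
        (lam * (-(∑ j ∈ Finset.Icc 1 n, cdfF f j) * Kfun f γ lam t n
          + 2 * ∑ i ∈ Finset.Icc 1 (n - 1), cdfF f (n - i) * Kfun f γ lam t i
          + ∑ i ∈ Finset.Icc 1 n, f i * (i : ℝ) * ((n : ℝ) + 1 - (i : ℝ)))) t)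
    ∧ Kfun f γ lam 0 n = 0 := by
  constructor
  · intro t ht
    by_cases hF : 0 < cdfF f n
    · -- main case
      have hfun : (fun s => Kfun f γ lam s n)
          = fun s => (n:ℝ) - ∑ i ∈ Finset.Icc 1 n,
              γ n i * Real.exp (-(lam * ∑ j ∈ Finset.Icc 1 i, cdfF f j) * s) := by
        funext s
        unfold Kfun Rfun
        rw [if_pos hF]
      rw [hfun]
      have h1 : HasDerivAt
          (fun s => ∑ i ∈ Finset.Icc 1 n,
              γ n i * Real.exp (-(lam * ∑ j ∈ Finset.Icc 1 i, cdfF f j) * s))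
          (∑ i ∈ Finset.Icc 1 n,
              γ n i * (Real.exp (-(lam * ∑ j ∈ Finset.Icc 1 i, cdfF f j) * t)
                * (-(lam * ∑ j ∈ Finset.Icc 1 i, cdfF f j) * 1))) t := by
        refine HasDerivAt.fun_sum fun i _ => ?_
        exact (((hasDerivAt_id t).const_mul
          (-(lam * ∑ j ∈ Finset.Icc 1 i, cdfF f j))).exp).const_mul _
      have h2 := h1.const_sub (n:ℝ)
      have heq : -(∑ i ∈ Finset.Icc 1 n,
              γ n i * (Real.exp (-(lam * ∑ j ∈ Finset.Icc 1 i, cdfF f j) * t)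
                * (-(lam * ∑ j ∈ Finset.Icc 1 i, cdfF f j) * 1)))
          = lam * (-(∑ j ∈ Finset.Icc 1 n, cdfF f j) * Kfun f γ lam t n
            + 2 * ∑ i ∈ Finset.Icc 1 (n - 1), cdfF f (n - i) * Kfun f γ lam t i
            + ∑ i ∈ Finset.Icc 1 n, f i * (i : ℝ) * ((n : ℝ) + 1 - (i : ℝ))) := by
        rw [← main_algebra hf_nonneg hγ_zero hγ_rec hn hF t]
        rw [← Finset.sum_neg_distrib]
        exact Finset.sum_congr rfl fun i _ => by ring
      rw [← heq]
      exact h2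
    · -- degenerate case : everything vanishes
      have h0 : cdfF f n = 0 := le_antisymm (not_lt.1 hF) (cdfF_nonneg hf_nonneg n)
      have hKconst : ∀ s : ℝ, Kfun f γ lam s n = 0 := by
        intro s
        unfold Kfun Rfun
        rw [if_neg hF]
        ring
      have hfun : (fun s => Kfun f γ lam s n) = fun _ => (0:ℝ) := funext hKconst
      have hz1 : ∑ i ∈ Finset.Icc 1 (n-1), cdfF f (n-i) * Kfun f γ lam t i = 0 :=
        Finset.sum_eq_zero fun i hi => by
          rw [cdfF_zero_of_le hf_nonneg h0 (Nat.sub_le n i)]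
          ring
      have hz2 : ∑ i ∈ Finset.Icc 1 n, f i * (i:ℝ) * ((n:ℝ) + 1 - (i:ℝ)) = 0 :=
        Finset.sum_eq_zero fun i hi => by
          rw [f_zero_of_cdfF_zero hf_nonneg h0 hi]
          ring
      rw [hfun, hKconst t, hz1, hz2]
      have : lam * (-(∑ j ∈ Finset.Icc 1 n, cdfF f j) * 0 + 2 * 0 + 0) = 0 := by ring
      rw [this]
      exact hasDerivAt_const t 0
  · -- boundary condition
    by_cases hF : 0 < cdfF f n
    · unfold Kfun Rfun
      rw [if_pos hF]
      have hterm : ∀ i ∈ Finset.Icc 1 n,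
          γ n i * Real.exp (-(lam * ∑ j ∈ Finset.Icc 1 i, cdfF f j) * 0) = γ n i := by
        intro i _
        rw [mul_zero, Real.exp_zero, mul_one]
      rw [Finset.sum_congr rfl hterm]
      obtain ⟨p, rfl⟩ : ∃ p, n = p + 1 := ⟨n - 1, by omega⟩
      rw [Finset.sum_Icc_succ_top (by omega), hγ_diag (p+1) hF,
        show p + 1 - 1 = p by omega]
      ring
    · unfold Kfun Rfun
      rw [if_neg hF]
      ring
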